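/- Let Γ be a Blackwell game with finitely many players, finite action sets, and bounded, Borel-measurable, tail-measurable payoff functions, let ε > 0, and for each player i let W_i = {p ∈ A^ℕ : f_i(p) ≥ v̄_i − ε/2}. Then for every player i, the minmax value of player i in the Blackwell game with the same players and action sets and with payoff function 1_{W_i} for player i equals 1. -/

import Mathlib

open MeasureTheory

namespace Blackwell

/-- The set of plays: infinite streams of action profiles. -/
abbrev Play {ι : Type*} (Ac : ι → Type*) : Type _ := ℕ → ∀ j, Ac j

/-- A behavior strategy of player `i`: a mixed action after every finite history.
A history of length `t` is encoded by the first `t` coordinates of a play, and the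
strategy is required to depend only on these coordinates. -/
structure Strategy {ι : Type*} (Ac : ι → Type*) (i : ι) where
  act : ℕ → Play Ac → PMF (Ac i)
  depends_on_past : ∀ (t : ℕ) (p q : Play Ac), (∀ s, s < t → p s = q s) → act t p = act t q

/-- A strategy profile: a behavior strategy for every player. -/
abbrev Profile {ι : Type*} (Ac : ι → Type*) : Type _ := ∀ i, Strategy Ac i

/-- The assignment, to each strategy profile `σ`, of the induced (Ionescu–Tulcea)
probability measure `P_σ` on the set of plays; it is uniquely characterized by the
probabilities it assigns to cylinder sets. -/
structure PlayMeasure {ι : Type*} [Fintype ι] (Ac : ι → Type*)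
    [∀ i, MeasurableSpace (Ac i)] where
  μ : Profile Ac → Measure (Play Ac)
  isProb : ∀ σ, IsProbabilityMeasure (μ σ)
  cyl : ∀ (σ : Profile Ac) (n : ℕ) (p : Play Ac),
    μ σ {q | ∀ t, t < n → q t = p t}
      = ∏ t ∈ Finset.range n, ∏ i, ((σ i).act t p) (p t i)

variable {ι : Type*} [Fintype ι] [DecidableEq ι] [Nonempty ι]
  {Ac : ι → Type*} [∀ i, Fintype (Ac i)] [∀ i, Nonempty (Ac i)]
  [∀ i, MeasurableSpace (Ac i)] [∀ i, DiscreteMeasurableSpace (Ac i)]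

/-- The expected payoff `E_σ[f]` of a strategy profile `σ` for payoff function `f`. -/
noncomputable def expPay (PM : PlayMeasure Ac) (σ : Profile Ac) (f : Play Ac → ℝ) : ℝ :=
  ∫ p, f p ∂(PM.μ σ)

/-- Concatenation of the history given by the first `n` coordinates of `h` with the play `q`. -/
def splice (n : ℕ) (h q : Play Ac) : Play Ac := fun t => if t < n then h t else q (t - n)

/-- The continuation of a strategy in the subgame that starts at the history
given by the first `n` coordinates of `h`. -/
def Strategy.shift {i : ι} (σi : Strategy Ac i) (n : ℕ) (h : Play Ac) : Strategy Ac i where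
  act t q := σi.act (n + t) (splice n h q)
  depends_on_past := by
    intro t p q hpq
    refine σi.depends_on_past _ _ _ ?_
    intro s hs
    simp only [splice]
    by_cases hsn : s < n
    · simp [hsn]
    · simp only [if_neg hsn]
      exact hpq (s - n) (by omega)

/-- The expected payoff `E_σ[f ∣ h]` in the subgame that starts at the history
given by the first `n` coordinates of `h`. -/
noncomputable def subExp (PM : PlayMeasure Ac) (σ : Profile Ac) (f : Play Ac → ℝ)
    (n : ℕ) (h : Play Ac) : ℝ :=
  ∫ q, f (splice n h q) ∂(PM.μ (fun i => (σ i).shift n h))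

/-- The minmax value of player `i`. -/
noncomputable def minmax (PM : PlayMeasure Ac) (f : Play Ac → ℝ) (i : ι) : ℝ :=
  ⨅ τ : Profile Ac, ⨆ σi : Strategy Ac i, expPay PM (Function.update τ i σi) f

/-- The maxmin value of player `i`. -/
noncomputable def maxmin (PM : PlayMeasure Ac) (f : Play Ac → ℝ) (i : ι) : ℝ :=
  ⨆ σi : Strategy Ac i, ⨅ τ : Profile Ac, expPay PM (Function.update τ i σi) f

/-- The minmax value of player `i` in the subgame that starts at the history
given by the first `n` coordinates of `h`. -/
noncomputable def subMinmax (PM : PlayMeasure Ac) (f : Play Ac → ℝ) (i : ι)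
    (n : ℕ) (h : Play Ac) : ℝ :=
  ⨅ τ : Profile Ac, ⨆ σi : Strategy Ac i, subExp PM (Function.update τ i σi) f n h

/-- The maxmin value of player `i` in the subgame that starts at the history
given by the first `n` coordinates of `h`. -/
noncomputable def subMaxmin (PM : PlayMeasure Ac) (f : Play Ac → ℝ) (i : ι)
    (n : ℕ) (h : Play Ac) : ℝ :=
  ⨆ σi : Strategy Ac i, ⨅ τ : Profile Ac, subExp PM (Function.update τ i σi) f n h

/-- A strategy profile `σ` is an `ε`-equilibrium if no player can gain more than `ε`
by a unilateral deviation. -/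
def IsEpsEquilibrium (PM : PlayMeasure Ac) (f : ι → Play Ac → ℝ) (ε : ℝ)
    (σ : Profile Ac) : Prop :=
  ∀ (i : ι) (σi : Strategy Ac i),
    expPay PM (Function.update σ i σi) (f i) ≤ expPay PM σ (f i) + ε

/-- A payoff function is tail-measurable if changing finitely many coordinates of the
play does not change its value. -/
def TailMeasurable (f : Play Ac → ℝ) : Prop :=
  ∀ p q : Play Ac, (∃ N, ∀ t, N ≤ t → p t = q t) → f p = f q

/-- A payoff function is bounded. -/
def BddPayoff (f : Play Ac → ℝ) : Prop := ∃ C, ∀ p, |f p| ≤ C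


/-! ### Auxiliary infrastructure -/

set_option linter.unusedSectionVars false
set_option linter.unusedVariables false

open Filter

section AuxBasic

instance {i : ι} : Nonempty (Strategy Ac i) :=
  ⟨⟨fun _ _ => PMF.pure (Classical.arbitrary _), fun _ _ _ _ => rfl⟩⟩

theorem Strategy.ext' {i : ι} {σ τ : Strategy Ac i} (h : ∀ t p, σ.act t p = τ.act t p) :
    σ = τ := by
  cases σ; cases τ
  simp only [Strategy.mk.injEq]
  funext t p
  exact h t p

theorem splice_lt {n t : ℕ} (h q : Play Ac) (ht : t < n) : splice n h q t = h t := if_pos ht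

theorem splice_ge {n t : ℕ} (h q : Play Ac) (ht : ¬ t < n) : splice n h q t = q (t - n) :=
  if_neg ht

theorem splice_add (n t : ℕ) (h q : Play Ac) : splice n h q (n + t) = q t := by
  have : ¬ n + t < n := by omega
  rw [splice_ge h q this]
  exact congrArg q (by omega)

theorem splice_shift_eq (n : ℕ) {h p : Play Ac} (H : ∀ t, t < n → h t = p t) :
    splice n h (fun s => p (n + s)) = p := by
  funext t
  by_cases ht : t < n
  · rw [splice_lt _ _ ht, H t ht]
  · rw [splice_ge _ _ ht]
    exact congrArg p (by omega)

/-- Projection of a play to its first `n` coordinates. -/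
def proj (n : ℕ) : Play Ac → (Fin n → ∀ j, Ac j) := fun p t => p ↑t

/-- Extension of a length-`n` history to a play (by an arbitrary continuation). -/
noncomputable def extend (n : ℕ) (w : Fin n → ∀ j, Ac j) : Play Ac :=
  fun t => if ht : t < n then w ⟨t, ht⟩ else Classical.arbitrary _

theorem extend_lt {n t : ℕ} (w : Fin n → ∀ j, Ac j) (ht : t < n) :
    extend n w t = w ⟨t, ht⟩ := dif_pos ht

theorem proj_extend (n : ℕ) (w : Fin n → ∀ j, Ac j) : proj (Ac := Ac) n (extend n w) = w :=
  funext fun t => by rw [proj, extend_lt w t.2]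

theorem extend_proj {n t : ℕ} (p : Play Ac) (ht : t < n) : extend n (proj n p) t = p t := by
  rw [extend_lt _ ht]; rfl

/-- The cylinder set determined by the first `n` coordinates of `h`. -/
def cylSet (n : ℕ) (h : Play Ac) : Set (Play Ac) := {q | ∀ t, t < n → q t = h t}

theorem cylSet_congr {n : ℕ} {h h' : Play Ac} (hh : ∀ t, t < n → h t = h' t) :
    cylSet n h = cylSet n h' := by
  ext q
  constructor <;> intro hq t ht
  · rw [hq t ht, hh t ht]
  · rw [hq t ht, hh t ht]

theorem measure_cylSet (PM : PlayMeasure Ac) (σ : Profile Ac) (n : ℕ) (p : Play Ac) :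
    PM.μ σ (cylSet n p) = ∏ t ∈ Finset.range n, ∏ j, ((σ j).act t p) (p t j) :=
  PM.cyl σ n p

theorem measurable_splice (n : ℕ) (h : Play Ac) : Measurable (splice n h) := by
  apply measurable_pi_lambda
  intro t
  by_cases ht : t < n
  · simp only [splice, if_pos ht]
    exact measurable_const
  · simp only [splice, if_neg ht]
    exact measurable_pi_apply _

theorem measurable_proj (n : ℕ) : Measurable (proj (Ac := Ac) n) :=
  measurable_pi_lambda _ fun t => measurable_pi_apply _

theorem measurableSet_cylSet (n : ℕ) (h : Play Ac) : MeasurableSet (cylSet n h) := by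
  have : cylSet n h = ⋂ t : Fin n, (fun q : Play Ac => q ↑t) ⁻¹' {h ↑t} := by
    ext q
    simp only [cylSet, Set.mem_setOf_eq, Set.mem_iInter, Set.mem_preimage,
      Set.mem_singleton_iff]
    exact ⟨fun hq t => hq t t.2, fun hq t ht => hq ⟨t, ht⟩⟩
  rw [this]
  exact MeasurableSet.iInter fun t => (measurable_pi_apply _) (measurableSet_singleton _)

theorem shift_congr {i : ι} (σi : Strategy Ac i) (n : ℕ) {h h' : Play Ac}
    (hh : ∀ s, s < n → h s = h' s) : σi.shift n h = σi.shift n h' := by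
  refine Strategy.ext' fun t q => ?_
  refine σi.depends_on_past _ _ _ fun s _ => ?_
  by_cases hsn : s < n
  · rw [splice_lt _ _ hsn, splice_lt _ _ hsn, hh s hsn]
  · rw [splice_ge _ _ hsn, splice_ge _ _ hsn]

theorem subExp_congr (PM : PlayMeasure Ac) (σ : Profile Ac) {f : Play Ac → ℝ}
    (htail : TailMeasurable f) (n : ℕ) {h h' : Play Ac} (hh : ∀ s, s < n → h s = h' s) :
    subExp PM σ f n h = subExp PM σ f n h' := by
  unfold subExp
  have h1 : (fun j => (σ j).shift n h) = fun j => (σ j).shift n h' :=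
    funext fun j => shift_congr _ _ hh
  rw [h1]
  refine integral_congr_ae (Filter.Eventually.of_forall fun q => ?_)
  refine htail _ _ ⟨n, fun t ht => ?_⟩
  have ht' : ¬ t < n := by omega
  rw [splice_ge _ _ ht', splice_ge _ _ ht']

theorem integrable_of_bdd {α : Type*} [MeasurableSpace α] {μ : Measure α} [IsFiniteMeasure μ]
    {φ : α → ℝ} (hm : Measurable φ) {C : ℝ} (hC : ∀ p, |φ p| ≤ C) : Integrable φ μ :=
  (integrable_const C).mono' hm.aestronglyMeasurable
    (Filter.Eventually.of_forall fun p => by simpa [Real.norm_eq_abs] using hC p)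

theorem abs_integral_le {α : Type*} [MeasurableSpace α] {μ : Measure α}
    [IsProbabilityMeasure μ] {φ : α → ℝ} {C : ℝ} (hC : ∀ p, |φ p| ≤ C) :
    |∫ p, φ p ∂μ| ≤ C := by
  have h := norm_integral_le_of_norm_le_const (μ := μ) (f := φ) (C := C)
    (Filter.Eventually.of_forall fun p => by simpa [Real.norm_eq_abs] using hC p)
  simpa [Real.norm_eq_abs, measure_univ] using h

theorem abs_expPay_le (PM : PlayMeasure Ac) (σ : Profile Ac) {f : Play Ac → ℝ} {C : ℝ}
    (hC : ∀ p, |f p| ≤ C) : |expPay PM σ f| ≤ C := by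
  haveI := PM.isProb σ
  exact abs_integral_le hC

theorem abs_subExp_le (PM : PlayMeasure Ac) (σ : Profile Ac) {f : Play Ac → ℝ} {C : ℝ}
    (hC : ∀ p, |f p| ≤ C) (n : ℕ) (h : Play Ac) : |subExp PM σ f n h| ≤ C := by
  haveI := PM.isProb (fun i => (σ i).shift n h)
  exact abs_integral_le fun q => hC _

theorem splice_preimage_cyl_pos {n m : ℕ} (hnm : n ≤ m) {h p : Play Ac}
    (H : ∀ t, t < n → h t = p t) :
    splice n h ⁻¹' cylSet m p = cylSet (m - n) (fun s => p (n + s)) := by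
  ext q
  simp only [Set.mem_preimage, cylSet, Set.mem_setOf_eq]
  constructor
  · intro hq s hs
    have h1 := hq (n + s) (by omega)
    rwa [splice_add] at h1
  · intro hq t ht
    by_cases htn : t < n
    · rw [splice_lt _ _ htn, H t htn]
    · rw [splice_ge _ _ htn]
      have h2 := hq (t - n) (by omega)
      rw [h2]
      exact congrArg p (by omega)

theorem splice_preimage_cyl_neg' {n m : ℕ} (hnm : n ≤ m) {h p : Play Ac}
    (H : ¬ ∀ t, t < n → h t = p t) :
    splice n h ⁻¹' cylSet m p = ∅ := by
  push_neg at H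
  obtain ⟨t, htn, hne⟩ := H
  ext q
  simp only [Set.mem_preimage, cylSet, Set.mem_setOf_eq, Set.mem_empty_iff_false, iff_false]
  intro hq
  exact hne ((splice_lt h q htn).symm.trans (hq t (by omega)))

end AuxBasic

section Decomp

/-- Cylinder sets of length at least `n` generate the product σ-algebra. -/
theorem generateFrom_cyl (n : ℕ) :
    (inferInstance : MeasurableSpace (Play Ac)) =
      MeasurableSpace.generateFrom {s | ∃ m, n ≤ m ∧ ∃ p : Play Ac, s = cylSet m p} := by
  set C : Set (Set (Play Ac)) := {s | ∃ m, n ≤ m ∧ ∃ p : Play Ac, s = cylSet m p} with hC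
  refine le_antisymm ?_ (MeasurableSpace.generateFrom_le ?_)
  · have key : ∀ t : ℕ, Measurable[MeasurableSpace.generateFrom C]
        (fun q : Play Ac => q t) := by
      intro t
      intro V hV
      set N := max n (t + 1) with hN
      have htN : t < N := by omega
      have hset : (fun q : Play Ac => q t) ⁻¹' V =
          ⋃ w : {w : Fin N → ∀ j, Ac j // w ⟨t, htN⟩ ∈ V}, cylSet N (extend N w.1) := by
        ext q
        simp only [Set.mem_preimage, Set.mem_iUnion]
        constructor
        · intro hq
          refine ⟨⟨proj N q, ?_⟩, ?_⟩
          · exact hq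
          · intro s hs
            exact (extend_proj q hs).symm
        · rintro ⟨⟨w, hw⟩, hq⟩
          have := hq t htN
          rw [extend_lt w htN] at this
          rw [this]
          exact hw
      rw [hset]
      exact MeasurableSet.iUnion fun w =>
        MeasurableSpace.measurableSet_generateFrom ⟨N, le_max_left _ _, _, rfl⟩
    have hpi : (inferInstance : MeasurableSpace (Play Ac)) =
        ⨆ t : ℕ, MeasurableSpace.comap (fun q : Play Ac => q t) inferInstance := rfl
    rw [hpi]
    exact iSup_le fun t => measurable_iff_comap_le.mp (key t)
  · rintro s ⟨m, hm, p, rfl⟩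
    exact measurableSet_cylSet m p

theorem isPiSystem_cyl (n : ℕ) :
    IsPiSystem {s : Set (Play Ac) | ∃ m, n ≤ m ∧ ∃ p : Play Ac, s = cylSet m p} := by
  rintro s ⟨m₁, hm₁, p₁, rfl⟩ t ⟨m₂, hm₂, p₂, rfl⟩ hne
  obtain ⟨q, hq1, hq2⟩ := Set.not_disjoint_iff.mp (fun hd => by
    rw [Set.disjoint_iff_inter_eq_empty] at hd
    exact (Set.nonempty_iff_ne_empty.mp hne) hd)
  rcases le_total m₁ m₂ with hle | hle
  · refine ⟨m₂, hm₂, p₂, ?_⟩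
    apply Set.eq_of_subset_of_subset
    · exact Set.inter_subset_right
    · intro r hr
      refine ⟨fun t ht => ?_, hr⟩
      rw [hr t (lt_of_lt_of_le ht hle), ← hq2 t (lt_of_lt_of_le ht hle), hq1 t ht]
  · refine ⟨m₁, hm₁, p₁, ?_⟩
    apply Set.eq_of_subset_of_subset
    · exact Set.inter_subset_left
    · intro r hr
      refine ⟨hr, fun t ht => ?_⟩
      rw [hr t (lt_of_lt_of_le ht hle), ← hq1 t (lt_of_lt_of_le ht hle), hq2 t ht]

/-- The cylinders of length `n` partition the play space with total mass one. -/
theorem sum_cyl (PM : PlayMeasure Ac) (σ : Profile Ac) (n : ℕ) :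
    ∑ w : Fin n → ∀ j, Ac j, PM.μ σ (cylSet n (extend n w)) = 1 := by
  haveI := PM.isProb σ
  have hU : ⋃ w : Fin n → ∀ j, Ac j, cylSet n (extend n w) = Set.univ := by
    ext q
    simp only [Set.mem_iUnion, Set.mem_univ, iff_true]
    exact ⟨proj n q, fun t ht => (extend_proj q ht).symm⟩
  have hd : Pairwise (Function.onFun Disjoint fun w : Fin n → ∀ j, Ac j =>
      cylSet n (extend n w)) := by
    intro w w' hne
    refine Set.disjoint_left.mpr fun q hq hq' => hne ?_
    funext t
    have h1 := hq t t.2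
    have h2 := hq' t t.2
    rw [extend_lt _ t.2] at h1
    rw [extend_lt _ t.2] at h2
    rw [← h1, ← h2]
  calc ∑ w : Fin n → ∀ j, Ac j, PM.μ σ (cylSet n (extend n w))
      = ∑' w : Fin n → ∀ j, Ac j, PM.μ σ (cylSet n (extend n w)) := (tsum_fintype _).symm
    _ = PM.μ σ (⋃ w : Fin n → ∀ j, Ac j, cylSet n (extend n w)) :=
        (measure_iUnion hd fun w => measurableSet_cylSet _ _).symm
    _ = 1 := by rw [hU, measure_univ]

/-- Per-cylinder evaluation of the decomposition terms (matching cylinder). -/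
theorem term_eval_pos (PM : PlayMeasure Ac) (σ : Profile Ac) {n m : ℕ} (hnm : n ≤ m)
    (p : Play Ac) (w : Fin n → ∀ j, Ac j) (H : ∀ t, t < n → extend n w t = p t) :
    PM.μ σ (cylSet n (extend n w)) *
        (PM.μ fun j => (σ j).shift n (extend n w)) (splice n (extend n w) ⁻¹' cylSet m p)
      = PM.μ σ (cylSet m p) := by
  rw [splice_preimage_cyl_pos hnm H]
  rw [cylSet_congr H, measure_cylSet, measure_cylSet, measure_cylSet]
  have hact : ∀ t ∈ Finset.range (m - n), ∀ j : ι,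
      ((σ j).shift n (extend n w)).act t (fun s => p (n + s))
        = (σ j).act (n + t) p := by
    intro t _ j
    show (σ j).act (n + t) (splice n (extend n w) fun s => p (n + s)) = _
    rw [splice_shift_eq n H]
  have h2 : ∏ t ∈ Finset.range (m - n), ∏ j,
        (((σ j).shift n (extend n w)).act t fun s => p (n + s)) ((fun s => p (n + s)) t j)
      = ∏ t ∈ Finset.Ico n m, ∏ j, ((σ j).act t p) (p t j) := by
    rw [Finset.prod_Ico_eq_prod_range]
    refine Finset.prod_congr rfl fun t ht => Finset.prod_congr rfl fun j _ => ?_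
    rw [hact t ht j]
  rw [h2]
  rw [Finset.range_eq_Ico n]
  rw [Finset.range_eq_Ico m]
  exact Finset.prod_Ico_consecutive _ (Nat.zero_le n) hnm

/-- The fundamental decomposition of `P_σ` over the cylinders of length `n`. -/
theorem measure_decomp (PM : PlayMeasure Ac) (σ : Profile Ac) (n : ℕ) :
    PM.μ σ = ∑ w : Fin n → ∀ j, Ac j,
      PM.μ σ (cylSet n (extend n w)) •
        (PM.μ fun j => (σ j).shift n (extend n w)).map (splice n (extend n w)) := by
  haveI := PM.isProb σ
  refine ext_of_generate_finite _ (generateFrom_cyl n) (isPiSystem_cyl n) ?_ ?_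
  · rintro s ⟨m, hnm, p, rfl⟩
    rw [Measure.finset_sum_apply]
    have happ : ∀ w : Fin n → ∀ j, Ac j,
        (PM.μ σ (cylSet n (extend n w)) •
          (PM.μ fun j => (σ j).shift n (extend n w)).map (splice n (extend n w)))
            (cylSet m p)
        = PM.μ σ (cylSet n (extend n w)) *
            (PM.μ fun j => (σ j).shift n (extend n w)) (splice n (extend n w) ⁻¹' cylSet m p) := by
      intro w
      rw [Measure.smul_apply, smul_eq_mul,
        Measure.map_apply (measurable_splice _ _) (measurableSet_cylSet _ _)]
    rw [Finset.sum_congr rfl fun w _ => happ w]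
    rw [Finset.sum_eq_single_of_mem (proj n p) (Finset.mem_univ _)]
    · exact (term_eval_pos PM σ hnm p _ fun t ht => extend_proj p ht).symm
    · intro w _ hw
      have H : ¬ ∀ t, t < n → extend n w t = p t := by
        intro H
        refine hw (funext fun t => ?_)
        have h1 := H t t.2
        rwa [extend_lt _ t.2] at h1
      rw [splice_preimage_cyl_neg' hnm H, measure_empty, mul_zero]
  · rw [Measure.finset_sum_apply]
    have happ : ∀ w : Fin n → ∀ j, Ac j,
        (PM.μ σ (cylSet n (extend n w)) •
          (PM.μ fun j => (σ j).shift n (extend n w)).map (splice n (extend n w)))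
            Set.univ
        = PM.μ σ (cylSet n (extend n w)) := by
      intro w
      haveI := PM.isProb (fun j => (σ j).shift n (extend n w))
      rw [Measure.smul_apply, smul_eq_mul,
        Measure.map_apply (measurable_splice _ _) MeasurableSet.univ,
        Set.preimage_univ, measure_univ, mul_one]
    rw [Finset.sum_congr rfl fun w _ => happ w, sum_cyl, measure_univ]

/-- Integral version of the decomposition. -/
theorem integral_decomp (PM : PlayMeasure Ac) (σ : Profile Ac) {φ : Play Ac → ℝ}
    (hφm : Measurable φ) {C : ℝ} (hφC : ∀ p, |φ p| ≤ C) (n : ℕ) :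
    ∫ p, φ p ∂PM.μ σ = ∑ w : Fin n → ∀ j, Ac j,
      (PM.μ σ (cylSet n (extend n w))).toReal •
        ∫ q, φ (splice n (extend n w) q) ∂PM.μ (fun j => (σ j).shift n (extend n w)) := by
  conv_lhs => rw [measure_decomp PM σ n]
  haveI := PM.isProb σ
  rw [integral_finset_sum_measure ?_]
  · refine Finset.sum_congr rfl fun w _ => ?_
    rw [integral_smul_measure,
      integral_map (measurable_splice _ _).aemeasurable hφm.aestronglyMeasurable]
  · intro w _
    haveI := PM.isProb (fun j => (σ j).shift n (extend n w))
    refine Integrable.smul_measure ?_ (measure_ne_top _ _)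
    rw [integrable_map_measure hφm.aestronglyMeasurable (measurable_splice _ _).aemeasurable]
    exact integrable_of_bdd (hφm.comp (measurable_splice _ _)) (fun q => hφC _)

theorem expPay_decomp (PM : PlayMeasure Ac) (σ : Profile Ac) {f : Play Ac → ℝ}
    (hfm : Measurable f) {C : ℝ} (hC : ∀ p, |f p| ≤ C) (n : ℕ) :
    expPay PM σ f = ∑ w : Fin n → ∀ j, Ac j,
      (PM.μ σ (cylSet n (extend n w))).toReal • subExp PM σ f n (extend n w) :=
  integral_decomp PM σ hfm hC n

/-- Decomposition when `φ` depends only on the first `n` coordinates. -/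
theorem integral_decomp_prefix (PM : PlayMeasure Ac) (σ : Profile Ac) {φ : Play Ac → ℝ}
    (hφm : Measurable φ) {C : ℝ} (hφC : ∀ p, |φ p| ≤ C) (n : ℕ)
    (hpre : ∀ p q : Play Ac, (∀ t, t < n → p t = q t) → φ p = φ q) :
    ∫ p, φ p ∂PM.μ σ = ∑ w : Fin n → ∀ j, Ac j,
      (PM.μ σ (cylSet n (extend n w))).toReal • φ (extend n w) := by
  rw [integral_decomp PM σ hφm hφC n]
  refine Finset.sum_congr rfl fun w _ => ?_
  congr 1
  haveI := PM.isProb (fun j => (σ j).shift n (extend n w))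
  have hc : ∀ q, φ (splice n (extend n w) q) = φ (extend n w) :=
    fun q => hpre _ _ fun t ht => splice_lt _ _ ht
  calc ∫ q, φ (splice n (extend n w) q) ∂PM.μ (fun j => (σ j).shift n (extend n w))
      = ∫ _, φ (extend n w) ∂PM.μ (fun j => (σ j).shift n (extend n w)) := by
        simp only [hc]
    _ = φ (extend n w) := by rw [integral_const]; simp

end Decomp

section Filtr

theorem measurable_prefix {n : ℕ} {g : Play Ac → ℝ}
    (hg : ∀ p q : Play Ac, (∀ t, t < n → p t = q t) → g p = g q) : Measurable g := by
  have hfac : g = (fun w : Fin n → ∀ j, Ac j => g (extend n w)) ∘ proj (Ac := Ac) n := by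
    funext p
    exact (hg _ _ fun t ht => extend_proj p ht).symm
  rw [hfac]
  exact Measurable.of_discrete.comp (measurable_proj n)

/-- The canonical filtration on plays. -/
def playFiltration : Filtration ℕ (inferInstance : MeasurableSpace (Play Ac)) where
  seq n := MeasurableSpace.comap (proj (Ac := Ac) n) inferInstance
  mono' := by
    intro n m hnm
    have hfac : proj (Ac := Ac) n =
        (fun w (t : Fin n) => w (Fin.castLE hnm t)) ∘ proj (Ac := Ac) m := rfl
    show MeasurableSpace.comap (proj (Ac := Ac) n) inferInstance ≤
      MeasurableSpace.comap (proj (Ac := Ac) m) inferInstance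
    rw [hfac, ← MeasurableSpace.comap_comp]
    exact MeasurableSpace.comap_mono (Measurable.comap_le Measurable.of_discrete)
  le' n := (measurable_proj n).comap_le

theorem measurable_filtration_prefix {n : ℕ} {g : Play Ac → ℝ}
    (hg : ∀ p q : Play Ac, (∀ t, t < n → p t = q t) → g p = g q) :
    Measurable[playFiltration (Ac := Ac) n] g := by
  have hfac : g = (fun w : Fin n → ∀ j, Ac j => g (extend n w)) ∘ proj (Ac := Ac) n := by
    funext p
    exact (hg _ _ fun t ht => extend_proj p ht).symm
  rw [hfac]
  exact Measurable.of_discrete.comp (measurable_iff_comap_le.mpr le_rfl)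

theorem iSup_playFiltration :
    (⨆ n, (playFiltration (Ac := Ac) n : MeasurableSpace (Play Ac)))
      = (inferInstance : MeasurableSpace (Play Ac)) := by
  refine le_antisymm (iSup_le fun n => (playFiltration (Ac := Ac)).le n) ?_
  have key : ∀ t : ℕ, Measurable[⨆ n, (playFiltration (Ac := Ac) n : MeasurableSpace (Play Ac))]
      (fun q : Play Ac => q t) := by
    intro t
    have h1 : Measurable[playFiltration (Ac := Ac) (t + 1)] (fun p : Play Ac => p t) := by
      have hfac : (fun p : Play Ac => p t) =
          (fun w : Fin (t + 1) → ∀ j, Ac j => w ⟨t, Nat.lt_succ_self t⟩) ∘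
            proj (Ac := Ac) (t + 1) := rfl
      rw [hfac]
      exact Measurable.of_discrete.comp (measurable_iff_comap_le.mpr le_rfl)
    exact h1.mono (le_iSup (fun n => (playFiltration (Ac := Ac) n : MeasurableSpace (Play Ac)))
      (t + 1)) le_rfl
  have hpi : (inferInstance : MeasurableSpace (Play Ac)) =
      ⨆ t : ℕ, MeasurableSpace.comap (fun q : Play Ac => q t) inferInstance := rfl
  conv_lhs => rw [hpi]
  exact iSup_le fun t => measurable_iff_comap_le.mp (key t)

/-- Set-integral decomposition over a `ℱ n`-measurable set. -/
theorem setIntegral_decomp (PM : PlayMeasure Ac) (σ : Profile Ac) {φ : Play Ac → ℝ}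
    (hφm : Measurable φ) {C : ℝ} (hφC : ∀ p, |φ p| ≤ C) (n : ℕ)
    (S : Set (Fin n → ∀ j, Ac j)) :
    ∫ p in proj (Ac := Ac) n ⁻¹' S, φ p ∂PM.μ σ = ∑ w : Fin n → ∀ j, Ac j,
      S.indicator (fun w => (PM.μ σ (cylSet n (extend n w))).toReal •
        ∫ q, φ (splice n (extend n w) q) ∂PM.μ (fun j => (σ j).shift n (extend n w))) w := by
  classical
  have hSm : MeasurableSet (proj (Ac := Ac) n ⁻¹' S) :=
    (measurable_proj n) (MeasurableSet.of_discrete)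
  rw [← integral_indicator hSm]
  have hbnd : ∀ p, |Set.indicator (proj (Ac := Ac) n ⁻¹' S) φ p| ≤ |C| := by
    intro p
    rw [Set.indicator_apply]
    split_ifs
    · exact le_trans (hφC p) (le_abs_self C)
    · simp [abs_nonneg]
  rw [integral_decomp PM σ (hφm.indicator hSm) hbnd n]
  refine Finset.sum_congr rfl fun w _ => ?_
  have hmem : ∀ q, (splice n (extend n w) q ∈ proj (Ac := Ac) n ⁻¹' S) ↔ w ∈ S := by
    intro q
    simp only [Set.mem_preimage]
    have hpr : proj (Ac := Ac) n (splice n (extend n w) q) = w := by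
      funext t
      show splice n (extend n w) q ↑t = w t
      rw [splice_lt _ _ t.2, extend_lt _ t.2]
    rw [hpr]
  by_cases hw : w ∈ S
  · rw [Set.indicator_of_mem hw]
    congr 1
    refine integral_congr_ae (Filter.Eventually.of_forall fun q => ?_)
    exact Set.indicator_of_mem ((hmem q).mpr hw) φ
  · rw [Set.indicator_of_notMem hw]
    have hz : ∀ q, Set.indicator (proj (Ac := Ac) n ⁻¹' S) φ (splice n (extend n w) q) = 0 :=
      fun q => Set.indicator_of_notMem (fun hmm => hw ((hmem q).mp hmm)) φ
    simp only [hz, integral_zero, smul_zero]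

/-- `subExp` at time `n` is (a version of) the conditional expectation w.r.t. `ℱ n`. -/
theorem subExp_eq_condexp (PM : PlayMeasure Ac) (σ : Profile Ac) {f : Play Ac → ℝ}
    (hfm : Measurable f) {C : ℝ} (hC : ∀ p, |f p| ≤ C) (htail : TailMeasurable f) (n : ℕ) :
    (fun p => subExp PM σ f n p) =ᵐ[PM.μ σ] (PM.μ σ)[f | playFiltration (Ac := Ac) n] := by
  haveI := PM.isProb σ
  have hgpre : ∀ p q : Play Ac, (∀ t, t < n → p t = q t) →
      subExp PM σ f n p = subExp PM σ f n q := fun p q h => subExp_congr PM σ htail n h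
  have hgm : Measurable (fun p => subExp PM σ f n p) := measurable_prefix hgpre
  have hgb : ∀ p, |subExp PM σ f n p| ≤ C := fun p => abs_subExp_le PM σ hC n p
  refine ae_eq_condExp_of_forall_setIntegral_eq ((playFiltration (Ac := Ac)).le n)
    (integrable_of_bdd hfm hC) (fun s _ _ => (integrable_of_bdd hgm hgb).integrableOn)
    ?_ ?_
  · rintro s ⟨S, -, rfl⟩ -
    rw [setIntegral_decomp PM σ hfm hC n S, setIntegral_decomp PM σ hgm hgb n S]
    refine Finset.sum_congr rfl fun w _ => ?_
    by_cases hw : w ∈ S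
    · rw [Set.indicator_of_mem hw, Set.indicator_of_mem hw]
      congr 1
      haveI := PM.isProb (fun j => (σ j).shift n (extend n w))
      have hc : ∀ q, subExp PM σ f n (splice n (extend n w) q) = subExp PM σ f n (extend n w) :=
        fun q => hgpre _ _ fun t ht => splice_lt _ _ ht
      calc ∫ q, subExp PM σ f n (splice n (extend n w) q)
              ∂PM.μ (fun j => (σ j).shift n (extend n w))
          = ∫ _, subExp PM σ f n (extend n w) ∂PM.μ (fun j => (σ j).shift n (extend n w)) := by
            simp only [hc]
        _ = subExp PM σ f n (extend n w) := by rw [integral_const]; simp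
        _ = ∫ q, f (splice n (extend n w) q) ∂PM.μ (fun j => (σ j).shift n (extend n w)) := rfl
    · rw [Set.indicator_of_notMem hw, Set.indicator_of_notMem hw]
  · exact (measurable_filtration_prefix hgpre).stronglyMeasurable.aestronglyMeasurable

/-- Lévy upward convergence for `subExp`. -/
theorem tendsto_subExp (PM : PlayMeasure Ac) (σ : Profile Ac) {f : Play Ac → ℝ}
    (hfm : Measurable f) {C : ℝ} (hC : ∀ p, |f p| ≤ C) (htail : TailMeasurable f) :
    ∀ᵐ p ∂PM.μ σ, Filter.Tendsto (fun n => subExp PM σ f n p)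
      Filter.atTop (nhds (f p)) := by
  haveI := PM.isProb σ
  have hmeas : StronglyMeasurable[⨆ n, (playFiltration (Ac := Ac) n :
      MeasurableSpace (Play Ac))] f := by
    rw [iSup_playFiltration]
    exact hfm.stronglyMeasurable
  have hlevy := (integrable_of_bdd (μ := PM.μ σ) hfm hC).tendsto_ae_condExp
    (ℱ := playFiltration (Ac := Ac)) hmeas
  have hae : ∀ᵐ p ∂PM.μ σ, ∀ n : ℕ,
      subExp PM σ f n p = ((PM.μ σ)[f | playFiltration (Ac := Ac) n]) p :=
    (MeasureTheory.ae_all_iff).mpr fun n => subExp_eq_condexp PM σ hfm hC htail n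
  filter_upwards [hlevy, hae] with p h1 h2
  have heq : (fun n => subExp PM σ f n p)
      = fun n => ((PM.μ σ)[f | playFiltration (Ac := Ac) n]) p := funext h2
  rw [heq]
  exact h1

end Filtr

section Game

/-- Opponents' strategy simulating the subgame at the history given by the first
`n` coordinates of `h`. -/
noncomputable def delayStrat (n : ℕ) (h : Play Ac) (j : ι) (σj : Strategy Ac j) : Strategy Ac j where
  act t p := if t < n then PMF.pure (h t j) else σj.act t (splice n h fun s => p (n + s))
  depends_on_past := by
    intro t p q hpq
    by_cases ht : t < n
    · simp [ht]
    · simp only [if_neg ht]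
      refine σj.depends_on_past t _ _ fun s hs => ?_
      by_cases hsn : s < n
      · rw [splice_lt _ _ hsn, splice_lt _ _ hsn]
      · rw [splice_ge _ _ hsn, splice_ge _ _ hsn]
        exact hpq (n + (s - n)) (by omega)

/-- Player `i`'s strategy in the original game mimicking, in the subgame at `h`, the
behavior that `σi` has in the subgame at `w`. -/
def reline {i : ι} (σi : Strategy Ac i) (n : ℕ) (w : Play Ac) : Strategy Ac i where
  act t p := σi.act t (splice n w fun s => p (n + s))
  depends_on_past := by
    intro t p q hpq
    refine σi.depends_on_past t _ _ fun s hs => ?_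
    by_cases hsn : s < n
    · rw [splice_lt _ _ hsn, splice_lt _ _ hsn]
    · rw [splice_ge _ _ hsn, splice_ge _ _ hsn]
      exact hpq (n + (s - n)) (by omega)

theorem splice_splice (n : ℕ) (h q : Play Ac) :
    (fun s => splice n h q (n + s)) = q := funext fun s => splice_add n s h q

/-- Simulation identity: subgame expectations of the delayed profile at any cylinder
equal subgame expectations against the original opponents at `h`. -/
theorem subExp_delay (PM : PlayMeasure Ac) {f : Play Ac → ℝ} (htail : TailMeasurable f)
    (i : ι) (τ : Profile Ac) (σi : Strategy Ac i) (n : ℕ) (h w : Play Ac) :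
    subExp PM (Function.update (fun j => delayStrat n h j (τ j)) i σi) f n w
      = subExp PM (Function.update τ i (reline σi n w)) f n h := by
  unfold subExp
  have hprof : (fun j => ((Function.update (fun j' => delayStrat n h j' (τ j')) i σi) j).shift n w)
      = fun j => ((Function.update τ i (reline σi n w)) j).shift n h := by
    funext j
    rcases eq_or_ne j i with rfl | hj
    · simp only [Function.update_self]
      refine Strategy.ext' fun t q => ?_
      show σi.act (n + t) (splice n w q)
        = (reline σi n w).act (n + t) (splice n h q)
      show _ = σi.act (n + t) (splice n w fun s => splice n h q (n + s))
      rw [splice_splice]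
    · simp only [Function.update_of_ne hj]
      refine Strategy.ext' fun t q => ?_
      show (delayStrat n h j (τ j)).act (n + t) (splice n w q)
        = (τ j).act (n + t) (splice n h q)
      have hnt : ¬ n + t < n := by omega
      show (if n + t < n then _ else (τ j).act (n + t) (splice n h fun s => splice n w q (n + s)))
        = _
      rw [if_neg hnt, splice_splice]
  rw [hprof]
  refine integral_congr_ae (Filter.Eventually.of_forall fun q => ?_)
  refine htail _ _ ⟨n, fun t ht => ?_⟩
  have ht' : ¬ t < n := by omega
  rw [splice_ge _ _ ht', splice_ge _ _ ht']

theorem bddAbove_subExp (PM : PlayMeasure Ac) {f : Play Ac → ℝ} {C : ℝ}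
    (hC : ∀ p, |f p| ≤ C) (i : ι) (τ : Profile Ac) (n : ℕ) (h : Play Ac) :
    BddAbove (Set.range fun σi' : Strategy Ac i =>
      subExp PM (Function.update τ i σi') f n h) := by
  refine ⟨C, ?_⟩
  rintro x ⟨σi', rfl⟩
  exact (abs_le.mp (abs_subExp_le PM _ hC n h)).2

theorem sum_toReal_cyl (PM : PlayMeasure Ac) (σ : Profile Ac) (n : ℕ) :
    ∑ w : Fin n → ∀ j, Ac j, (PM.μ σ (cylSet n (extend n w))).toReal = 1 := by
  have h1 : (∑ w : Fin n → ∀ j, Ac j, PM.μ σ (cylSet n (extend n w))).toReal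
      = ∑ w : Fin n → ∀ j, Ac j, (PM.μ σ (cylSet n (extend n w))).toReal := by
    haveI := PM.isProb σ
    exact ENNReal.toReal_sum fun w _ => measure_ne_top _ _
  rw [← h1, sum_cyl]
  rfl

/-- Key Lemma (P1): the minmax value is a lower bound for the best-reply value in
every subgame. -/
theorem minmax_le_sup_subExp (PM : PlayMeasure Ac) {f : Play Ac → ℝ} {C : ℝ}
    (hfm : Measurable f) (hC : ∀ p, |f p| ≤ C) (htail : TailMeasurable f)
    (i : ι) (τ : Profile Ac) (n : ℕ) (h : Play Ac) :
    minmax PM f i ≤ ⨆ σi' : Strategy Ac i, subExp PM (Function.update τ i σi') f n h := by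
  set τ' : Profile Ac := fun j => delayStrat n h j (τ j) with hτ'
  have hstep : ∀ σi : Strategy Ac i, expPay PM (Function.update τ' i σi) f
      ≤ ⨆ σi' : Strategy Ac i, subExp PM (Function.update τ i σi') f n h := by
    intro σi
    rw [expPay_decomp PM _ hfm hC n]
    calc ∑ w : Fin n → ∀ j, Ac j,
          (PM.μ (Function.update τ' i σi) (cylSet n (extend n w))).toReal •
            subExp PM (Function.update τ' i σi) f n (extend n w)
        ≤ ∑ w : Fin n → ∀ j, Ac j,
            (PM.μ (Function.update τ' i σi) (cylSet n (extend n w))).toReal •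
              (⨆ σi' : Strategy Ac i, subExp PM (Function.update τ i σi') f n h) := by
          refine Finset.sum_le_sum fun w _ => ?_
          rw [smul_eq_mul, smul_eq_mul]
          refine mul_le_mul_of_nonneg_left ?_ ENNReal.toReal_nonneg
          rw [subExp_delay PM htail i τ σi n h (extend n w)]
          exact le_ciSup (bddAbove_subExp PM hC i τ n h) _
      _ = ⨆ σi' : Strategy Ac i, subExp PM (Function.update τ i σi') f n h := by
          rw [← Finset.sum_smul, sum_toReal_cyl, one_smul]
  have hbb : BddBelow (Set.range fun τ'' : Profile Ac =>
      ⨆ σi' : Strategy Ac i, expPay PM (Function.update τ'' i σi') f) := by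
    refine ⟨-C, ?_⟩
    rintro x ⟨τ'', rfl⟩
    have h1 : -C ≤ expPay PM (Function.update τ'' i (Classical.arbitrary _)) f :=
      (abs_le.mp (abs_expPay_le PM _ hC)).1
    refine le_trans h1 (le_ciSup (f := fun σi' : Strategy Ac i =>
      expPay PM (Function.update τ'' i σi') f) ⟨C, ?_⟩ (Classical.arbitrary _))
    rintro x ⟨σi', rfl⟩
    exact (abs_le.mp (abs_expPay_le PM _ hC)).2
  exact le_trans (ciInf_le hbb τ') (ciSup_le hstep)

/-- Key Lemma (P2, pasting): the expected subgame values at time `n` are at most the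
best-reply value of the whole game. -/
theorem sum_smul_V_le (PM : PlayMeasure Ac) {f : Play Ac → ℝ} {C : ℝ}
    (hfm : Measurable f) (hC : ∀ p, |f p| ≤ C) (htail : TailMeasurable f)
    (i : ι) (τ : Profile Ac) (σd : Strategy Ac i) (n : ℕ) :
    ∑ w : Fin n → ∀ j, Ac j,
        (PM.μ (Function.update τ i σd) (cylSet n (extend n w))).toReal •
          (⨆ σi' : Strategy Ac i, subExp PM (Function.update τ i σi') f n (extend n w))
      ≤ ⨆ σi' : Strategy Ac i, expPay PM (Function.update τ i σi') f := by
  refine le_of_forall_pos_le_add fun η hη => ?_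
  have hch : ∀ w : Fin n → ∀ j, Ac j, ∃ σw : Strategy Ac i,
      (⨆ σi' : Strategy Ac i, subExp PM (Function.update τ i σi') f n (extend n w)) - η
        < subExp PM (Function.update τ i σw) f n (extend n w) :=
    fun w => exists_lt_of_lt_ciSup (sub_lt_self _ hη)
  choose σw hσw using hch
  let σhat : Strategy Ac i :=
    ⟨fun t p => if t < n then σd.act t p else (σw (proj n p)).act t p, by
      intro t p q hpq
      by_cases ht : t < n
      · simp only [if_pos ht]
        exact σd.depends_on_past _ _ _ hpq
      · simp only [if_neg ht]
        have hw : proj (Ac := Ac) n p = proj n q :=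
          funext fun s => hpq _ (lt_of_lt_of_le s.2 (le_of_not_gt ht))
        rw [hw]
        exact (σw _).depends_on_past _ _ _ hpq⟩
  have hcyl : ∀ w : Fin n → ∀ j, Ac j,
      PM.μ (Function.update τ i σd) (cylSet n (extend n w))
        = PM.μ (Function.update τ i σhat) (cylSet n (extend n w)) := by
    intro w
    rw [measure_cylSet, measure_cylSet]
    refine Finset.prod_congr rfl fun t ht => Finset.prod_congr rfl fun j _ => ?_
    rcases eq_or_ne j i with rfl | hj
    · simp only [Function.update_self]
      show _ = (if t < n then σd.act t (extend n w) else _) _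
      rw [if_pos (Finset.mem_range.mp ht)]
    · simp only [Function.update_of_ne hj]
  have hsub : ∀ w : Fin n → ∀ j, Ac j,
      subExp PM (Function.update τ i (σw w)) f n (extend n w)
        = subExp PM (Function.update τ i σhat) f n (extend n w) := by
    intro w
    unfold subExp
    have hprof : (fun j => ((Function.update τ i (σw w)) j).shift n (extend n w))
        = fun j => ((Function.update τ i σhat) j).shift n (extend n w) := by
      funext j
      rcases eq_or_ne j i with rfl | hj
      · simp only [Function.update_self]
        refine Strategy.ext' fun t q => ?_
        show (σw w).act (n + t) (splice n (extend n w) q)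
          = σhat.act (n + t) (splice n (extend n w) q)
        have hnt : ¬ n + t < n := by omega
        have harg : proj (Ac := Ac) n (splice n (extend n w) q) = w := by
          funext s
          show splice n (extend n w) q ↑s = w s
          rw [splice_lt _ _ s.2, extend_lt _ s.2]
        show _ = (if n + t < n then σd.act (n + t) _ else
          (σw (proj n (splice n (extend n w) q))).act (n + t) (splice n (extend n w) q))
        rw [if_neg hnt, harg]
      · simp only [Function.update_of_ne hj]
    rw [hprof]
  calc ∑ w : Fin n → ∀ j, Ac j,
        (PM.μ (Function.update τ i σd) (cylSet n (extend n w))).toReal •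
          (⨆ σi' : Strategy Ac i, subExp PM (Function.update τ i σi') f n (extend n w))
      ≤ ∑ w : Fin n → ∀ j, Ac j,
          (PM.μ (Function.update τ i σd) (cylSet n (extend n w))).toReal •
            (subExp PM (Function.update τ i σhat) f n (extend n w) + η) := by
        refine Finset.sum_le_sum fun w _ => ?_
        rw [smul_eq_mul, smul_eq_mul]
        refine mul_le_mul_of_nonneg_left ?_ ENNReal.toReal_nonneg
        rw [← hsub w]
        linarith [hσw w]
    _ = (∑ w : Fin n → ∀ j, Ac j,
          (PM.μ (Function.update τ i σd) (cylSet n (extend n w))).toReal •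
            subExp PM (Function.update τ i σhat) f n (extend n w))
        + (∑ w : Fin n → ∀ j, Ac j,
            (PM.μ (Function.update τ i σd) (cylSet n (extend n w))).toReal) * η := by
        rw [Finset.sum_mul, ← Finset.sum_add_distrib]
        refine Finset.sum_congr rfl fun w _ => ?_
        rw [smul_eq_mul, smul_eq_mul, mul_add]
    _ = expPay PM (Function.update τ i σhat) f + η := by
        have hexp : expPay PM (Function.update τ i σhat) f
            = ∑ w : Fin n → ∀ j, Ac j,
              (PM.μ (Function.update τ i σd) (cylSet n (extend n w))).toReal •
                subExp PM (Function.update τ i σhat) f n (extend n w) := by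
          rw [expPay_decomp PM _ hfm hC n]
          exact Finset.sum_congr rfl fun w _ => by rw [hcyl w]
        rw [sum_toReal_cyl, one_mul, ← hexp]
    _ ≤ (⨆ σi' : Strategy Ac i, expPay PM (Function.update τ i σi') f) + η := by
        have h1 : expPay PM (Function.update τ i σhat) f
            ≤ ⨆ σi' : Strategy Ac i, expPay PM (Function.update τ i σi') f := by
          refine le_ciSup (f := fun σi' : Strategy Ac i =>
            expPay PM (Function.update τ i σi') f) ⟨C, ?_⟩ σhat
          rintro x ⟨σi', rfl⟩
          exact (abs_le.mp (abs_expPay_le PM _ hC)).2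
        linarith

end Game

section Main

/-- Core estimate: against any `τ`, player `i` has a strategy making the event
`{f < minmax - ε/2}` have probability at most `γ`. -/
theorem main_bound (PM : PlayMeasure Ac) {f : Play Ac → ℝ} {C : ℝ}
    (hfm : Measurable f) (hC : ∀ p, |f p| ≤ C) (htail : TailMeasurable f)
    {ε : ℝ} (hε : 0 < ε) (i : ι) (τ : Profile Ac) {γ : ℝ} (hγ : 0 < γ) :
    ∃ σi : Strategy Ac i, PM.μ (Function.update τ i σi)
      {p : Play Ac | f p < minmax PM f i - ε / 2} ≤ ENNReal.ofReal γ := by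
  classical
  set v := minmax PM f i with hv
  set δ := γ * (ε / 2) with hδdef
  have hε2 : (0:ℝ) < ε / 2 := by linarith
  have hδ : 0 < δ := mul_pos hγ hε2
  set V0 := ⨆ σi' : Strategy Ac i, expPay PM (Function.update τ i σi') f with hV0
  obtain ⟨σd, hσd⟩ : ∃ σd : Strategy Ac i,
      V0 - δ < expPay PM (Function.update τ i σd) f :=
    exists_lt_of_lt_ciSup (sub_lt_self _ hδ)
  refine ⟨σd, ?_⟩
  set σs : Profile Ac := Function.update τ i σd with hσs
  haveI := PM.isProb σs
  set Vf : ℕ → Play Ac → ℝ := fun n p =>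
    ⨆ σi' : Strategy Ac i, subExp PM (Function.update τ i σi') f n p with hVf
  set g : ℕ → Play Ac → ℝ := fun n p => subExp PM σs f n p with hgdef
  set D : ℕ → Play Ac → ℝ := fun n p => Vf n p - g n p with hDdef
  -- prefix congruence
  have hgpre : ∀ n (p q : Play Ac), (∀ t, t < n → p t = q t) → g n p = g n q :=
    fun n p q hpq => subExp_congr PM σs htail n hpq
  have hVpre : ∀ n (p q : Play Ac), (∀ t, t < n → p t = q t) → Vf n p = Vf n q :=
    fun n p q hpq => iSup_congr fun σi' => subExp_congr PM _ htail n hpq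
  have hDpre : ∀ n (p q : Play Ac), (∀ t, t < n → p t = q t) → D n p = D n q :=
    fun n p q hpq => by simp only [hDdef, hVpre n p q hpq, hgpre n p q hpq]
  -- bounds
  have hVle : ∀ n (p : Play Ac), v ≤ Vf n p :=
    fun n p => minmax_le_sup_subExp PM hfm hC htail i τ n p
  have hgle : ∀ n (p : Play Ac), g n p ≤ Vf n p := fun n p =>
    le_ciSup (f := fun σi' : Strategy Ac i =>
      subExp PM (Function.update τ i σi') f n p) (bddAbove_subExp PM hC i τ n p) σd
  have hD0 : ∀ n (p : Play Ac), 0 ≤ D n p := fun n p => sub_nonneg.mpr (hgle n p)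
  have habsV : ∀ n (p : Play Ac), |Vf n p| ≤ C := by
    intro n p
    rw [abs_le]
    constructor
    · refine le_trans (abs_le.mp (abs_subExp_le PM
        (Function.update τ i (Classical.arbitrary _)) hC n p)).1 ?_
      exact le_ciSup (bddAbove_subExp PM hC i τ n p) _
    · exact ciSup_le fun σi' => (abs_le.mp (abs_subExp_le PM _ hC n p)).2
  have habsD : ∀ n (p : Play Ac), |D n p| ≤ C + C := by
    intro n p
    have h1 := habsV n p
    have h2 := abs_subExp_le PM σs hC n p
    calc |D n p| = |Vf n p + -(g n p)| := by rw [← sub_eq_add_neg]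
      _ ≤ |Vf n p| + |-(g n p)| := abs_add_le _ _
      _ = |Vf n p| + |g n p| := by rw [abs_neg]
      _ ≤ C + C := add_le_add h1 h2
  have hDm : ∀ n, Measurable (D n) := fun n => measurable_prefix (hDpre n)
  -- the expectation bound
  have hint : ∀ n, ∫ p, D n p ∂PM.μ σs ≤ δ := by
    intro n
    rw [integral_decomp_prefix PM σs (hDm n) (habsD n) n (hDpre n)]
    have hsplit : ∀ w : Fin n → ∀ j, Ac j,
        (PM.μ σs (cylSet n (extend n w))).toReal • D n (extend n w)
          = (PM.μ σs (cylSet n (extend n w))).toReal • Vf n (extend n w)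
            - (PM.μ σs (cylSet n (extend n w))).toReal • g n (extend n w) := by
      intro w
      rw [smul_eq_mul, smul_eq_mul, smul_eq_mul, ← mul_sub]
    rw [Finset.sum_congr rfl fun w _ => hsplit w, Finset.sum_sub_distrib]
    have h1 : ∑ w : Fin n → ∀ j, Ac j,
        (PM.μ σs (cylSet n (extend n w))).toReal • Vf n (extend n w) ≤ V0 :=
      sum_smul_V_le PM hfm hC htail i τ σd n
    have h2 : expPay PM σs f = ∑ w : Fin n → ∀ j, Ac j,
        (PM.μ σs (cylSet n (extend n w))).toReal • g n (extend n w) :=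
      expPay_decomp PM σs hfm hC n
    have h3 : V0 - δ < ∑ w : Fin n → ∀ j, Ac j,
        (PM.μ σs (cylSet n (extend n w))).toReal • g n (extend n w) := by
      rw [← h2]; exact hσd
    linarith
  -- Lévy convergence
  have hlevy := tendsto_subExp PM σs hfm hC htail
  -- liminf bound
  set Dl : Play Ac → ENNReal := fun p =>
    Filter.liminf (fun n => ENNReal.ofReal (D n p)) Filter.atTop with hDl
  have hDlint : ∫⁻ p, Dl p ∂PM.μ σs ≤ ENNReal.ofReal δ := by
    refine le_trans (lintegral_liminf_le fun n => (hDm n).ennreal_ofReal) ?_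
    refine Filter.liminf_le_of_frequently_le (Filter.Frequently.of_forall fun n => ?_)
    rw [← ofReal_integral_eq_lintegral_ofReal
      (integrable_of_bdd (μ := PM.μ σs) (hDm n) (habsD n))
      (Filter.Eventually.of_forall (hD0 n))]
    exact ENNReal.ofReal_le_ofReal (hint n)
  have hDlm : Measurable Dl := Measurable.liminf fun n => (hDm n).ennreal_ofReal
  have hbad : PM.μ σs {p | ENNReal.ofReal (ε / 2) ≤ Dl p} ≤ ENNReal.ofReal γ := by
    have hmark := mul_meas_ge_le_lintegral₀ (μ := PM.μ σs) hDlm.aemeasurable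
      (ENNReal.ofReal (ε / 2))
    have h2 : PM.μ σs {p | ENNReal.ofReal (ε / 2) ≤ Dl p}
        ≤ ENNReal.ofReal δ / ENNReal.ofReal (ε / 2) := by
      rw [ENNReal.le_div_iff_mul_le (Or.inl (by
          simp only [ne_eq, ENNReal.ofReal_eq_zero, not_le]; linarith))
        (Or.inl ENNReal.ofReal_ne_top)]
      calc PM.μ σs {p | ENNReal.ofReal (ε / 2) ≤ Dl p} * ENNReal.ofReal (ε / 2)
          = ENNReal.ofReal (ε / 2) * PM.μ σs {p | ENNReal.ofReal (ε / 2) ≤ Dl p} :=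
            mul_comm _ _
        _ ≤ ∫⁻ p, Dl p ∂PM.μ σs := hmark
        _ ≤ ENNReal.ofReal δ := hDlint
    rwa [← ENNReal.ofReal_div_of_pos hε2, hδdef, mul_div_assoc,
      div_self (ne_of_gt hε2), mul_one] at h2
  -- inclusion of the bad event
  have hincl : {p : Play Ac | f p < v - ε / 2} ⊆
      {p | ENNReal.ofReal (ε / 2) ≤ Dl p} ∪
        {p | ¬ Filter.Tendsto (fun n => g n p) Filter.atTop (nhds (f p))} := by
    intro p hp
    by_cases hconv : Filter.Tendsto (fun n => g n p) Filter.atTop (nhds (f p))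
    · left
      by_contra hlt
      simp only [Set.mem_setOf_eq, not_le] at hlt
      rw [Set.mem_setOf_eq] at hp
      have hfreq : ∃ᶠ n in Filter.atTop, ENNReal.ofReal (D n p) < ENNReal.ofReal (ε / 2) :=
        Filter.frequently_lt_of_liminf_lt (by isBoundedDefault) hlt
      have hfreq' : ∃ᶠ n in Filter.atTop, v - ε / 2 < g n p := by
        refine hfreq.mono fun n hn => ?_
        have hdn : D n p < ε / 2 := (ENNReal.ofReal_lt_ofReal_iff hε2).mp hn
        have h1 := hVle n p
        have : g n p = Vf n p - D n p := by simp [hDdef]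
        linarith
      have hev : ∀ᶠ n in Filter.atTop, g n p < v - ε / 2 :=
        hconv.eventually_lt_const hp
      obtain ⟨n, h1, h2⟩ := (hfreq'.and_eventually hev).exists
      linarith
    · right
      exact hconv
  have hnull : PM.μ σs {p : Play Ac |
      ¬ Filter.Tendsto (fun n => g n p) Filter.atTop (nhds (f p))} = 0 := by
    exact hlevy
  calc PM.μ σs {p : Play Ac | f p < v - ε / 2}
      ≤ PM.μ σs ({p | ENNReal.ofReal (ε / 2) ≤ Dl p} ∪
          {p | ¬ Filter.Tendsto (fun n => g n p) Filter.atTop (nhds (f p))}) :=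
        measure_mono hincl
    _ ≤ PM.μ σs {p | ENNReal.ofReal (ε / 2) ≤ Dl p} +
          PM.μ σs {p | ¬ Filter.Tendsto (fun n => g n p) Filter.atTop (nhds (f p))} :=
        measure_union_le _ _
    _ = PM.μ σs {p | ENNReal.ofReal (ε / 2) ≤ Dl p} := by rw [hnull, add_zero]
    _ ≤ ENNReal.ofReal γ := hbad

end Main

/-- With `W_i = {p : f_i(p) ≥ v̄_i - ε/2}`, the minmax value of player `i`
in the auxiliary Blackwell game with payoff `1_(W_i)` for player `i` equals `1`. -/
theorem minmax_indicator_eq_one (PM : PlayMeasure Ac) (f : ι → Play Ac → ℝ)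
    (hbdd : ∀ j, BddPayoff (f j)) (hmeas : ∀ j, Measurable (f j))
    (htail : ∀ j, TailMeasurable (f j))
    (ε : ℝ) (hε : 0 < ε) (i : ι) :
    minmax PM
      (Set.indicator {p : Play Ac | minmax PM (f i) i - ε / 2 ≤ f i p} fun _ => (1 : ℝ))
      i = 1 := by
  classical
  obtain ⟨C, hC⟩ := hbdd i
  set W : Set (Play Ac) := {p : Play Ac | minmax PM (f i) i - ε / 2 ≤ f i p} with hW
  have hWm : MeasurableSet W := measurableSet_le measurable_const (hmeas i)
  have hexp : ∀ σ : Profile Ac,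
      expPay PM σ (W.indicator fun _ => (1 : ℝ)) = (PM.μ σ W).toReal := by
    intro σ
    haveI := PM.isProb σ
    rw [expPay, integral_indicator_const _ hWm, smul_eq_mul, mul_one]
    rfl
  have hle1 : ∀ (τ : Profile Ac) (σi : Strategy Ac i),
      expPay PM (Function.update τ i σi) (W.indicator fun _ => (1 : ℝ)) ≤ 1 := by
    intro τ σi
    rw [hexp]
    haveI := PM.isProb (Function.update τ i σi)
    have h1 : PM.μ (Function.update τ i σi) W ≤ 1 := prob_le_one
    calc (PM.μ (Function.update τ i σi) W).toReal ≤ (1 : ENNReal).toReal :=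
        ENNReal.toReal_mono ENNReal.one_ne_top h1
      _ = 1 := by simp
  have hsup : ∀ τ : Profile Ac,
      (⨆ σi : Strategy Ac i,
        expPay PM (Function.update τ i σi) (W.indicator fun _ => (1 : ℝ))) = 1 := by
    intro τ
    refine le_antisymm (ciSup_le (hle1 τ)) ?_
    refine le_of_forall_pos_le_add fun γ hγ => ?_
    obtain ⟨σi, hσi⟩ := main_bound PM (hmeas i) hC (htail i) hε i τ hγ
    haveI := PM.isProb (Function.update τ i σi)
    have hWc : PM.μ (Function.update τ i σi) Wᶜ ≤ ENNReal.ofReal γ := by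
      refine le_trans (le_of_eq ?_) hσi
      congr 1
      ext p
      simp only [hW, Set.mem_compl_iff, Set.mem_setOf_eq, not_le]
    have hone : (1 : ENNReal) = PM.μ (Function.update τ i σi) W +
        PM.μ (Function.update τ i σi) Wᶜ := (prob_add_prob_compl hWm).symm
    have h2 : (1 : ENNReal) ≤ PM.μ (Function.update τ i σi) W + ENNReal.ofReal γ := by
      rw [hone]
      exact add_le_add le_rfl hWc
    have h3 : (1 : ℝ) ≤ (PM.μ (Function.update τ i σi) W).toReal + γ := by
      have hfin : PM.μ (Function.update τ i σi) W + ENNReal.ofReal γ ≠ ⊤ :=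
        ENNReal.add_ne_top.mpr ⟨measure_ne_top _ _, ENNReal.ofReal_ne_top⟩
      have := ENNReal.toReal_mono hfin h2
      rwa [ENNReal.toReal_one, ENNReal.toReal_add (measure_ne_top _ _)
        ENNReal.ofReal_ne_top, ENNReal.toReal_ofReal hγ.le] at this
    have h4 : 1 - γ ≤ expPay PM (Function.update τ i σi) (W.indicator fun _ => (1 : ℝ)) := by
      rw [hexp]
      linarith
    have h5 : expPay PM (Function.update τ i σi) (W.indicator fun _ => (1 : ℝ))
        ≤ ⨆ σi' : Strategy Ac i,
          expPay PM (Function.update τ i σi') (W.indicator fun _ => (1 : ℝ)) := by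
      refine le_ciSup (f := fun σi' : Strategy Ac i =>
        expPay PM (Function.update τ i σi') (W.indicator fun _ => (1 : ℝ))) ⟨1, ?_⟩ σi
      rintro x ⟨σi', rfl⟩
      exact hle1 τ σi'
    linarith
  unfold minmax
  simp only [hsup]
  exact ciInf_const

end Blackwell
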